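/- There exists an absolute constant c > 0 such that the following holds. Let A be an n×n symmetric random matrix with entries A_{ij} = A_{ji} = Y_{ij}, where the random variables Y_{ij} for all pairs (i,j) with 1 ≤ i ≤ j ≤ n are independent, each moment bounded with parameter L = 1 and satisfying E[Y_{ij}] = 0. Let P(A) = Σ_{σ ∈ S_n} Π_{i=1}^n A_{i,σ(i)} denote the permanent of A. Then for every t > 0, Pr[ |P(A)| ≥ t·√(n!) ] ≤ max{ e^{−n}, e² · e^{−c·t^{2/n}} }. -/

import Mathlib

open MeasureTheory ProbabilityTheory Finset

/-- A real random variable `Z` is *moment bounded* with parameter `L > 0` if all its absolute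
moments exist and for every integer `i ≥ 1`, `E[|Z|^i] ≤ i·L·E[|Z|^{i-1}]`. -/
def MomentBounded {Ω : Type*} [MeasurableSpace Ω] (P : Measure Ω) (Z : Ω → ℝ) (L : ℝ) : Prop :=
  (∀ i : ℕ, Integrable (fun ω => |Z ω| ^ i) P) ∧
  ∀ i : ℕ, 1 ≤ i → (∫ ω, |Z ω| ^ i ∂P) ≤ i * L * ∫ ω, |Z ω| ^ (i - 1) ∂P


section Coloring
variable {α : Type*} [Fintype α] [LinearOrder α]

lemma exists_good_set (M M' : Equiv.Perm α) (B : Finset α)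
    (hM2 : ∀ x, M (M x) = x) (hM'2 : ∀ x, M' (M' x) = x)
    (hMB : ∀ x ∈ B, M x ∈ B ∧ M x ≠ x) (hM'B : ∀ x ∈ B, M' x ∈ B ∧ M' x ≠ x) :
    ∃ S : Finset α, ∀ x ∈ B, (M x ∈ S ↔ x ∉ S) ∧ (M' x ∈ S ↔ x ∉ S) := by
  classical
  set ρ : Equiv.Perm α := M * M' with hρ
  have hρ_apply : ∀ x, ρ x = M (M' x) := fun x => rfl
  have hM'inv : M'⁻¹ = M' := by
    ext x
    conv_lhs => rw [← hM'2 x]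
    exact Equiv.symm_apply_apply _ _
  have hMinv : M⁻¹ = M := by
    ext x
    conv_lhs => rw [← hM2 x]
    exact Equiv.symm_apply_apply _ _
  -- closure facts
  have hρB : ∀ x ∈ B, ρ x ∈ B := fun x hx => (hMB _ (hM'B x hx).1).1
  have hρpowB : ∀ (j : ℕ), ∀ x ∈ B, (ρ ^ j) x ∈ B := by
    intro j
    induction j with
    | zero => simp
    | succ j ih =>
      intro x hx
      rw [pow_succ, Equiv.Perm.mul_apply]
      exact ih _ (hρB x hx)
  -- the key "no odd relation" fact
  have PQ : ∀ j : ℕ, (∀ x ∈ B, (ρ ^ j) x ≠ M' x) ∧ (∀ x ∈ B, (ρ ^ j) x ≠ M x) := by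
    intro j
    induction j using Nat.strong_induction_on with
    | _ j ih =>
      match j with
      | 0 =>
        constructor
        · intro x hx h
          simp only [pow_zero, Equiv.Perm.coe_one, id_eq] at h
          exact (hM'B x hx).2 h.symm
        · intro x hx h
          simp only [pow_zero, Equiv.Perm.coe_one, id_eq] at h
          exact (hMB x hx).2 h.symm
      | 1 =>
        constructor
        · intro x hx h
          simp only [pow_one] at h
          rw [hρ_apply] at h
          exact (hMB _ (hM'B x hx).1).2 h
        · intro x hx h
          simp only [pow_one] at h
          rw [hρ_apply] at h
          have := congrArg M h
          rw [hM2, hM2] at this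
          exact (hM'B x hx).2 this
      | (j + 2) =>
        constructor
        · -- P (j+2) from Q (j+1)
          intro x hx h
          have hx' : ρ x ∈ B := hρB x hx
          rw [pow_succ, Equiv.Perm.mul_apply] at h
          have e2 : M' x = M (ρ x) := by rw [hρ_apply, hM2]
          rw [e2] at h
          exact (ih (j + 1) (by omega)).2 (ρ x) hx' h
        · -- Q (j+2) from P (j+1)
          intro x hx h
          have h2 : M ((ρ ^ (j + 2)) x) = x := by rw [h, hM2]
          rw [pow_succ', Equiv.Perm.mul_apply, hρ_apply, hM2] at h2
          -- h2 : M' ((ρ^(j+1)) x) = x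
          have h3 : (ρ ^ (j + 1)) x = M' x := by
            have := congrArg M' h2
            rw [hM'2] at this
            exact this
          exact (ih (j + 1) (by omega)).1 x hx h3
  have noSC : ∀ x ∈ B, ¬ ρ.SameCycle x (M' x) := by
    intro x hx hsc
    obtain ⟨i, _, hi⟩ := hsc.exists_pow_eq'
    exact (PQ i).1 x hx hi
  -- conjugation fact
  have hconj : ∀ i : ℤ, M' * ρ ^ i * M'⁻¹ = ρ ^ (-i) := by
    intro i
    have h1 : M' * ρ * M'⁻¹ = ρ⁻¹ := by
      rw [hρ, hM'inv]
      ext x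
      simp only [Equiv.Perm.coe_mul, Function.comp_apply, mul_inv_rev, hM'inv, hMinv]
      rw [hM'2]
    have h2 := map_zpow (MulAut.conj M') ρ i
    simp only [MulAut.conj_apply] at h2
    rw [h2, h1, inv_zpow, zpow_neg]
  have conjSC : ∀ a b, ρ.SameCycle (M' a) (M' b) ↔ ρ.SameCycle a b := by
    have key : ∀ a b, ρ.SameCycle a b → ρ.SameCycle (M' a) (M' b) := by
      intro a b ⟨i, hi⟩
      refine ⟨-i, ?_⟩
      have := congrFun (congrArg (fun (g : Equiv.Perm α) => (g : α → α)) (hconj i)) (M' a)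
      simp only [Equiv.Perm.coe_mul, Function.comp_apply, hM'inv] at this
      rw [hM'2, hi] at this
      exact this.symm
    intro a b
    constructor
    · intro h
      have := key _ _ h
      rwa [hM'2, hM'2] at this
    · exact key a b
  -- the relation
  set rel : α → α → Prop := fun x y => ρ.SameCycle x y ∨ ρ.SameCycle x (M' y) with hrel
  have rel_refl : ∀ x, rel x x := fun x => Or.inl (Equiv.Perm.SameCycle.refl _ _)
  have rel_symm : ∀ {x y}, rel x y → rel y x := by
    intro x y h
    rcases h with h | h
    · exact Or.inl h.symm
    · right
      have : ρ.SameCycle (M' x) (M' (M' y)) ↔ ρ.SameCycle x (M' y) := conjSC x (M' y)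
      rw [hM'2] at this
      exact (this.mpr h).symm
  have rel_trans : ∀ {x y z}, rel x y → rel y z → rel x z := by
    intro x y z h1 h2
    rcases h1 with h1 | h1 <;> rcases h2 with h2 | h2
    · exact Or.inl (h1.trans h2)
    · exact Or.inr (h1.trans h2)
    · right
      have : ρ.SameCycle (M' y) (M' z) := (conjSC y z).mpr h2
      exact h1.trans this
    · left
      have : ρ.SameCycle (M' y) (M' (M' z)) := (conjSC y (M' z)).mpr h2
      rw [hM'2] at this
      exact h1.trans this
  set C : α → Finset α := fun x => univ.filter (rel x) with hC
  have memC : ∀ x y, y ∈ C x ↔ rel x y := by intro x y; simp [hC]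
  have Cne : ∀ x, (C x).Nonempty := fun x => ⟨x, (memC x x).mpr (rel_refl x)⟩
  have Ceq : ∀ {x y}, rel x y → C x = C y := by
    intro x y h
    ext z
    rw [memC, memC]
    exact ⟨fun hz => rel_trans (rel_symm h) hz, fun hz => rel_trans h hz⟩
  set mf : α → α := fun x => (C x).min' (Cne x) with hmf
  have mf_congr : ∀ {a b}, C a = C b → mf a = mf b := by
    intro a b h
    apply le_antisymm
    · exact Finset.min'_le _ _ (h ▸ Finset.min'_mem (C b) (Cne b))
    · exact Finset.min'_le _ _ (h ▸ Finset.min'_mem (C a) (Cne a))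
  set S : Finset α := univ.filter (fun x => ρ.SameCycle (mf x) x) with hS
  have memS : ∀ x, x ∈ S ↔ ρ.SameCycle (mf x) x := by intro x; simp [hS]
  refine ⟨S, ?_⟩
  intro x hx
  have hyC : mf x ∈ C x := (C x).min'_mem (Cne x)
  have hrelxy : rel x (mf x) := (memC x (mf x)).mp hyC
  set y := mf x with hy
  have hyB : y ∈ B := by
    rcases hrelxy with h | h
    · obtain ⟨i, _, hi⟩ := h.exists_pow_eq'
      rw [← hi]; exact hρpowB i x hx
    · obtain ⟨i, _, hi⟩ := h.exists_pow_eq'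
      have hin : M' y ∈ B := by rw [← hi]; exact hρpowB i x hx
      have h2 : M' (M' y) ∈ B := (hM'B _ hin).1
      rwa [hM'2] at h2
  have hrelxM' : rel x (M' x) := by
    right; rw [hM'2]
  have hSCM'M : ρ.SameCycle (M' x) (M x) := by
    refine ⟨1, ?_⟩
    simp only [zpow_one, hρ_apply, hM'2]
  have hrelxM : rel x (M x) := rel_trans hrelxM' (Or.inl hSCM'M)
  have hmfM' : mf (M' x) = y := mf_congr (Ceq hrelxM').symm
  have hmfM : mf (M x) = y := mf_congr (Ceq hrelxM).symm
  -- exactly one of (SC y x), (SC y (M' x))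
  have not_both : ¬ (ρ.SameCycle y x ∧ ρ.SameCycle y (M' x)) := by
    rintro ⟨h1, h2⟩
    exact noSC x hx (h1.symm.trans h2)
  have at_least : ρ.SameCycle y x ∨ ρ.SameCycle y (M' x) := by
    rcases hrelxy with h | h
    · exact Or.inl h.symm
    · right
      have : ρ.SameCycle (M' (M' x)) (M' y) := by rw [hM'2]; exact h
      exact ((conjSC (M' x) y).mp this).symm
  have hxS := memS x
  rw [← hy] at hxS
  have hM'xS := memS (M' x)
  rw [hmfM'] at hM'xS
  have hMxS := memS (M x)
  rw [hmfM] at hMxS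
  have key : ρ.SameCycle y (M' x) ↔ ¬ ρ.SameCycle y x :=
    ⟨fun h hx' => not_both ⟨hx', h⟩, fun h => at_least.resolve_left h⟩
  constructor
  · rw [hMxS, hxS]
    have hMM' : ρ.SameCycle y (M x) ↔ ρ.SameCycle y (M' x) :=
      ⟨fun h => h.trans hSCM'M.symm, fun h => h.trans hSCM'M⟩
    rw [hMM']
    exact key
  · rw [hM'xS, hxS]
    exact key

end Coloring


section Edges
variable {n : ℕ}

abbrev EIdx (n : ℕ) := {p : Fin n × Fin n // p.1 ≤ p.2}

def nrm (i j : Fin n) : EIdx n :=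
  if h : i ≤ j then ⟨(i, j), h⟩ else ⟨(j, i), le_of_not_ge h⟩

lemma nrm_eq_iff (i j : Fin n) (e : EIdx n) :
    nrm i j = e ↔ (i = e.1.1 ∧ j = e.1.2) ∨ (i = e.1.2 ∧ j = e.1.1) := by
  obtain ⟨⟨a, b⟩, hab⟩ := e
  simp only [nrm]
  split_ifs with h
  · constructor
    · intro he
      left
      have := congrArg (fun x => x.1) he
      simp only [Subtype.ext_iff, Prod.ext_iff] at he ⊢
      exact ⟨he.1, he.2⟩
    · intro hc
      rcases hc with ⟨h1, h2⟩ | ⟨h1, h2⟩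
      · exact Subtype.ext (Prod.ext h1 h2)
      · have hba : a = b := le_antisymm hab (by rw [← h1, ← h2]; exact h)
        exact Subtype.ext (Prod.ext (h1.trans hba.symm) (h2.trans hba))
  · push_neg at h
    constructor
    · intro he
      right
      simp only [Subtype.ext_iff, Prod.ext_iff] at he
      exact ⟨he.2, he.1⟩
    · intro hc
      rcases hc with ⟨h1, h2⟩ | ⟨h1, h2⟩
      · subst h1; subst h2
        exact absurd hab (not_le.mpr h)
      · exact Subtype.ext (Prod.ext h2 h1)

lemma nrm_fst_snd (i j : Fin n) :
    ((nrm i j).1.1 = i ∧ (nrm i j).1.2 = j) ∨ ((nrm i j).1.1 = j ∧ (nrm i j).1.2 = i) := by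
  simp only [nrm]
  split_ifs with h
  · exact Or.inl ⟨rfl, rfl⟩
  · exact Or.inr ⟨rfl, rfl⟩

/-- multiplicity of edge `e` in permutation `σ` -/
def emul (σ : Equiv.Perm (Fin n)) (e : EIdx n) : ℕ :=
  (univ.filter (fun i => nrm i (σ i) = e)).card

lemma emul_fiber_mem (σ : Equiv.Perm (Fin n)) (e : EIdx n) (i : Fin n) :
    i ∈ univ.filter (fun i => nrm i (σ i) = e) ↔
      (i = e.1.1 ∧ σ i = e.1.2) ∨ (i = e.1.2 ∧ σ i = e.1.1) := by
  simp only [mem_filter, mem_univ, true_and, nrm_eq_iff]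

lemma emul_sum (σ : Equiv.Perm (Fin n)) : ∑ e : EIdx n, emul σ e = n := by
  have h := Finset.card_eq_sum_card_fiberwise
    (s := (univ : Finset (Fin n))) (t := (univ : Finset (EIdx n)))
    (f := fun i => nrm i (σ i)) (fun i _ => mem_univ _)
  simpa [emul] using h.symm

lemma emul_le_two (σ : Equiv.Perm (Fin n)) (e : EIdx n) : emul σ e ≤ 2 := by
  have hsub : univ.filter (fun i => nrm i (σ i) = e) ⊆ {e.1.1, e.1.2} := by
    intro i hi
    rw [emul_fiber_mem] at hi
    rcases hi with ⟨h, _⟩ | ⟨h, _⟩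
    · exact mem_insert.mpr (Or.inl h)
    · exact mem_insert.mpr (Or.inr (mem_singleton.mpr h))
  calc emul σ e ≤ ({e.1.1, e.1.2} : Finset (Fin n)).card := Finset.card_le_card hsub
    _ ≤ 2 := Finset.card_insert_le _ _ |>.trans (by simp)

lemma emul_pos_iff (σ : Equiv.Perm (Fin n)) (e : EIdx n) :
    1 ≤ emul σ e ↔ (σ e.1.1 = e.1.2 ∨ σ e.1.2 = e.1.1) := by
  rw [emul, Finset.one_le_card]
  constructor
  · rintro ⟨i, hi⟩
    rw [emul_fiber_mem] at hi
    rcases hi with ⟨h1, h2⟩ | ⟨h1, h2⟩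
    · left; rw [← h1]; exact h2
    · right; rw [← h1]; exact h2
  · intro h
    rcases h with h | h
    · exact ⟨e.1.1, (emul_fiber_mem σ e _).mpr (Or.inl ⟨rfl, h⟩)⟩
    · exact ⟨e.1.2, (emul_fiber_mem σ e _).mpr (Or.inr ⟨rfl, h⟩)⟩

lemma emul_eq_two (σ : Equiv.Perm (Fin n)) (e : EIdx n) (h : emul σ e = 2) :
    σ e.1.1 = e.1.2 ∧ σ e.1.2 = e.1.1 ∧ e.1.1 ≠ e.1.2 := by
  classical
  have hne : e.1.1 ≠ e.1.2 := by
    intro hab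
    have hsub : univ.filter (fun i => nrm i (σ i) = e) ⊆ {e.1.1} := by
      intro i hi
      rw [emul_fiber_mem] at hi
      rcases hi with ⟨h1, _⟩ | ⟨h1, _⟩
      · exact mem_singleton.mpr h1
      · rw [← hab] at h1; exact mem_singleton.mpr h1
    have := Finset.card_le_card hsub
    rw [emul] at h
    simp [h] at this
  have hsub : univ.filter (fun i => nrm i (σ i) = e) ⊆ {e.1.1, e.1.2} := by
    intro i hi
    rw [emul_fiber_mem] at hi
    rcases hi with ⟨h1, _⟩ | ⟨h1, _⟩
    · exact mem_insert.mpr (Or.inl h1)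
    · exact mem_insert.mpr (Or.inr (mem_singleton.mpr h1))
  have hcard : ({e.1.1, e.1.2} : Finset (Fin n)).card ≤ 2 := by
    apply (Finset.card_insert_le _ _).trans; simp
  have heq : univ.filter (fun i => nrm i (σ i) = e) = {e.1.1, e.1.2} := by
    apply Finset.eq_of_subset_of_card_le hsub
    rw [emul] at h; omega
  have h1 : e.1.1 ∈ univ.filter (fun i => nrm i (σ i) = e) := by
    rw [heq]; exact mem_insert_self _ _
  have h2 : e.1.2 ∈ univ.filter (fun i => nrm i (σ i) = e) := by
    rw [heq]; exact mem_insert.mpr (Or.inr (mem_singleton_self _))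
  rw [emul_fiber_mem] at h1 h2
  constructor
  · rcases h1 with ⟨_, hb⟩ | ⟨ha, _⟩
    · exact hb
    · exact absurd ha hne
  constructor
  · rcases h2 with ⟨ha, _⟩ | ⟨_, hb⟩
    · exact absurd ha.symm hne
    · exact hb
  · exact hne

def validPair (σ τ : Equiv.Perm (Fin n)) : Prop := ∀ e : EIdx n, emul σ e + emul τ e ≠ 1

lemma validPair_symm {σ τ : Equiv.Perm (Fin n)} (h : validPair σ τ) : validPair τ σ :=
  fun e => by rw [add_comm]; exact h e

/-- workhorse: an edge covered by τ but not by σ must be doubly covered by τ -/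
lemma W1 {σ τ : Equiv.Perm (Fin n)} (h : validPair σ τ) {i j : Fin n}
    (hcov : τ i = j ∨ τ j = i) (hncov : ¬(σ i = j ∨ σ j = i)) :
    τ i = j ∧ τ j = i ∧ i ≠ j := by
  set e := nrm i j with he
  have hor := nrm_fst_snd i j
  rw [← he] at hor
  have hm0 : emul σ e = 0 := by
    by_contra hc
    have : 1 ≤ emul σ e := by omega
    rw [emul_pos_iff] at this
    rcases hor with ⟨ha, hb⟩ | ⟨ha, hb⟩ <;> rw [ha, hb] at this <;> tauto
  have hm1 : 1 ≤ emul τ e := by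
    rw [emul_pos_iff]
    rcases hor with ⟨ha, hb⟩ | ⟨ha, hb⟩ <;> rw [ha, hb] <;> tauto
  have hm2 : emul τ e = 2 := by
    have := h e
    have := emul_le_two τ e
    omega
  obtain ⟨ha, hb, hne⟩ := emul_eq_two τ e hm2
  rcases hor with ⟨h1, h2⟩ | ⟨h1, h2⟩
  · rw [h1, h2] at ha hb hne; exact ⟨ha, hb, hne⟩
  · rw [h1, h2] at ha hb hne; exact ⟨hb, ha, fun hij => hne hij.symm⟩

lemma W2 {σ τ : Equiv.Perm (Fin n)} (h : validPair σ τ) {i : Fin n} (hfix : σ i = i) :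
    τ i = i := by
  set e := nrm i i with he
  have hee : e.1.1 = i ∧ e.1.2 = i := by
    rcases nrm_fst_snd i i with h' | h' <;> rw [← he] at h' <;> exact h'
  have hm1 : emul σ e = 1 := by
    apply le_antisymm
    · have hsub : univ.filter (fun k => nrm k (σ k) = e) ⊆ {i} := by
        intro k hk
        rw [emul_fiber_mem] at hk
        rcases hk with ⟨h1, _⟩ | ⟨h1, _⟩
        · rw [hee.1] at h1; exact mem_singleton.mpr h1
        · rw [hee.2] at h1; exact mem_singleton.mpr h1
      have := Finset.card_le_card hsub
      simpa [emul] using this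
    · rw [emul_pos_iff, hee.1, hee.2]
      exact Or.inl hfix
  have := h e
  have : 1 ≤ emul τ e := by omega
  rw [emul_pos_iff, hee.1, hee.2] at this
  tauto

end Edges

section Struct
variable {n : ℕ}

open Finset Equiv

def Bset (σ τ : Equiv.Perm (Fin n)) : Finset (Fin n) :=
  univ.filter (fun i => τ i ≠ σ i ∧ τ i ≠ σ⁻¹ i)

lemma mem_Bset {σ τ : Equiv.Perm (Fin n)} {i : Fin n} :
    i ∈ Bset σ τ ↔ τ i ≠ σ i ∧ τ i ≠ σ⁻¹ i := by simp [Bset]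

lemma not_mem_Bset {σ τ : Equiv.Perm (Fin n)} {i : Fin n} :
    i ∉ Bset σ τ ↔ τ i = σ i ∨ τ i = σ⁻¹ i := by
  rw [mem_Bset]; tauto

lemma Bset_struct {σ τ : Equiv.Perm (Fin n)} (h : validPair σ τ) {i : Fin n}
    (hi : i ∈ Bset σ τ) :
    σ (σ i) = i ∧ σ i ≠ i ∧ τ (τ i) = i ∧ τ i ≠ i ∧ σ i ∈ Bset σ τ ∧ τ i ∈ Bset σ τ := by
  rw [mem_Bset] at hi
  obtain ⟨hτσ, hτσi⟩ := hi
  have hσne : σ i ≠ i := by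
    intro hfix
    exact hτσ ((W2 h hfix).trans hfix.symm)
  have hτne : τ i ≠ i := by
    intro hfix
    exact hσne (W2 (validPair_symm h) hfix)
  -- τ is an involution at i
  have hτ2 : τ (τ i) = i := by
    have := W1 h (Or.inl rfl) (i := i) (j := τ i) ?_
    · exact this.2.1
    · rintro (hc | hc)
      · exact hτσ hc.symm
      · exact hτσi (Equiv.Perm.eq_inv_iff_eq.mpr hc)
  have hτinv : τ⁻¹ i = τ i := by
    conv_lhs => rw [← hτ2]
    exact Equiv.symm_apply_apply _ _
  -- σ is an involution at i
  have hσ2 : σ (σ i) = i := by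
    have := W1 (validPair_symm h) (Or.inl rfl) (i := i) (j := σ i) ?_
    · exact this.2.1
    · rintro (hc | hc)
      · exact hτσ hc
      · -- hc : τ (σ i) = i
        have h2 : σ i = τ⁻¹ i := Equiv.Perm.eq_inv_iff_eq.mpr hc
        rw [hτinv] at h2
        exact hτσ h2.symm
  have hσinv : σ⁻¹ i = σ i := by
    conv_lhs => rw [← hσ2]
    exact Equiv.symm_apply_apply _ _
  have hτσi' : τ (σ i) ≠ i := by
    intro hc
    have h2 : σ i = τ⁻¹ i := Equiv.Perm.eq_inv_iff_eq.mpr hc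
    rw [hτinv] at h2
    exact hτσ h2.symm
  refine ⟨hσ2, hσne, hτ2, hτne, ?_, ?_⟩
  · rw [mem_Bset, hσ2]
    constructor
    · exact hτσi'
    · rw [show σ⁻¹ (σ i) = i from Equiv.symm_apply_apply σ i]
      exact hτσi'
  · rw [mem_Bset, hτ2]
    constructor
    · intro hc
      have h2 : τ i = σ⁻¹ i := Equiv.Perm.eq_inv_iff_eq.mpr hc.symm
      exact hτσi h2
    · intro hc
      have : τ i = σ i := by
        have := congrArg σ hc
        rw [show σ (σ⁻¹ (τ i)) = τ i from Equiv.apply_symm_apply σ (τ i)] at this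
        exact this.symm
      exact hτσ this
end Struct

section Counting
variable {n : ℕ}

open Finset Equiv

instance validPair.dec (σ τ : Equiv.Perm (Fin n)) : Decidable (validPair σ τ) := by
  unfold validPair; infer_instance

noncomputable def Sfun (σ τ : Equiv.Perm (Fin n)) : Finset (Fin n) :=
  if h : ∃ S : Finset (Fin n), ∀ x ∈ Bset σ τ,
      ((σ x ∈ S ↔ x ∉ S) ∧ (τ x ∈ S ↔ x ∉ S)) then h.choose else ∅

lemma Sfun_spec {σ τ : Equiv.Perm (Fin n)} (h : validPair σ τ) :
    ∀ x ∈ Bset σ τ, (σ x ∈ Sfun σ τ ↔ x ∉ Sfun σ τ) ∧ (τ x ∈ Sfun σ τ ↔ x ∉ Sfun σ τ) := by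
  classical
  have hstr := fun i (hi : i ∈ Bset σ τ) => Bset_struct h hi
  have hex : ∃ S : Finset (Fin n), ∀ x ∈ Bset σ τ,
      ((σ x ∈ S ↔ x ∉ S) ∧ (τ x ∈ S ↔ x ∉ S)) := by
    set B := Bset σ τ with hB
    set f : Fin n → Fin n := fun x => if x ∈ B then σ x else x with hf
    set g : Fin n → Fin n := fun x => if x ∈ B then τ x else x with hg
    have hfx : ∀ x ∈ B, f x = σ x := fun x hx => by simp only [hf, if_pos hx]
    have hgx : ∀ x ∈ B, g x = τ x := fun x hx => by simp only [hg, if_pos hx]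
    have hff : ∀ x, f (f x) = x := by
      intro x
      by_cases hx : x ∈ B
      · rw [hfx x hx, hfx _ (hstr x hx).2.2.2.2.1]
        exact (hstr x hx).1
      · simp only [hf, if_neg hx]
    have hgg : ∀ x, g (g x) = x := by
      intro x
      by_cases hx : x ∈ B
      · rw [hgx x hx, hgx _ (hstr x hx).2.2.2.2.2]
        exact (hstr x hx).2.2.1
      · simp only [hg, if_neg hx]
    set M : Equiv.Perm (Fin n) := ⟨f, f, hff, hff⟩ with hM
    set M' : Equiv.Perm (Fin n) := ⟨g, g, hgg, hgg⟩ with hM'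
    have hMapp : ∀ x, M x = f x := fun x => rfl
    have hM'app : ∀ x, M' x = g x := fun x => rfl
    obtain ⟨S, hS⟩ := exists_good_set M M' B hff hgg
      (fun x hx => by
        rw [hMapp, hfx x hx]
        exact ⟨(hstr x hx).2.2.2.2.1, (hstr x hx).2.1⟩)
      (fun x hx => by
        rw [hM'app, hgx x hx]
        exact ⟨(hstr x hx).2.2.2.2.2, (hstr x hx).2.2.2.1⟩)
    refine ⟨S, fun x hx => ?_⟩
    have := hS x hx
    rwa [hMapp, hM'app, hfx x hx, hgx x hx] at this
  rw [Sfun, dif_pos hex]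
  exact hex.choose_spec

/-- the encoding function -/
noncomputable def hfun (σ τ : Equiv.Perm (Fin n)) : Fin n → Fin n :=
  fun x => if x ∈ Bset σ τ then (if x ∈ Sfun σ τ then σ x else τ x) else σ x

lemma Bc_closed {σ τ : Equiv.Perm (Fin n)} (h : validPair σ τ) :
    (∀ x, x ∉ Bset σ τ → σ x ∉ Bset σ τ) ∧ (∀ x, x ∉ Bset σ τ → τ x ∉ Bset σ τ) := by
  have hstr := fun i (hi : i ∈ Bset σ τ) => Bset_struct h hi
  constructor
  · intro x hx hc
    apply hx
    have h2 : σ (σ x) = x := by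
      have hσinv := (hstr _ hc).1
      -- hσinv : σ (σ (σ x)) = σ x, so σ (σ x) = x by injectivity
      have := σ.injective hσinv
      exact this
    rw [← h2]
    exact (hstr _ hc).2.2.2.2.1
  · intro x hx hc
    apply hx
    have h2 : τ (τ x) = x := by
      have := (hstr _ hc).2.2.1
      exact τ.injective this
    rw [← h2]
    exact (hstr _ hc).2.2.2.2.2

lemma hfun_parts {σ τ : Equiv.Perm (Fin n)} (h : validPair σ τ) :
    (∀ x, x ∉ Bset σ τ → hfun σ τ x ∉ Bset σ τ) ∧
    (∀ x ∈ Bset σ τ, x ∈ Sfun σ τ → hfun σ τ x ∈ Bset σ τ ∧ hfun σ τ x ∉ Sfun σ τ) ∧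
    (∀ x ∈ Bset σ τ, x ∉ Sfun σ τ → hfun σ τ x ∈ Bset σ τ ∧ hfun σ τ x ∈ Sfun σ τ) := by
  have hstr := fun i (hi : i ∈ Bset σ τ) => Bset_struct h hi
  have hspec := Sfun_spec h
  refine ⟨?_, ?_, ?_⟩
  · intro x hx
    rw [hfun, if_neg hx]
    exact (Bc_closed h).1 x hx
  · intro x hx hxS
    rw [hfun, if_pos hx, if_pos hxS]
    refine ⟨(hstr x hx).2.2.2.2.1, ?_⟩
    rw [(hspec x hx).1]
    simp [hxS]
  · intro x hx hxS
    rw [hfun, if_pos hx, if_neg hxS]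
    refine ⟨(hstr x hx).2.2.2.2.2, ?_⟩
    rw [(hspec x hx).2]
    exact hxS

lemma hfun_inj {σ τ : Equiv.Perm (Fin n)} (h : validPair σ τ) :
    Function.Injective (hfun σ τ) := by
  obtain ⟨hP0, hP1, hP2⟩ := hfun_parts h
  intro a b hab
  by_cases haB : a ∈ Bset σ τ <;> by_cases hbB : b ∈ Bset σ τ
  · by_cases haS : a ∈ Sfun σ τ <;> by_cases hbS : b ∈ Sfun σ τ
    · rw [hfun, if_pos haB, if_pos haS, hfun, if_pos hbB, if_pos hbS] at hab
      exact σ.injective hab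
    · exfalso
      have h1 := (hP1 a haB haS).2
      have h2 := (hP2 b hbB hbS).2
      rw [hab] at h1
      exact h1 h2
    · exfalso
      have h1 := (hP1 b hbB hbS).2
      have h2 := (hP2 a haB haS).2
      rw [hab] at h2
      exact h1 h2
    · rw [hfun, if_pos haB, if_neg haS, hfun, if_pos hbB, if_neg hbS] at hab
      exact τ.injective hab
  · exfalso
    have h1 : hfun σ τ a ∈ Bset σ τ := by
      by_cases haS : a ∈ Sfun σ τ
      · exact (hP1 a haB haS).1
      · exact (hP2 a haB haS).1
    have h2 := hP0 b hbB
    rw [hab] at h1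
    exact h2 h1
  · exfalso
    have h1 : hfun σ τ b ∈ Bset σ τ := by
      by_cases hbS : b ∈ Sfun σ τ
      · exact (hP1 b hbB hbS).1
      · exact (hP2 b hbB hbS).1
    have h2 := hP0 a haB
    rw [hab] at h2
    exact h2 h1
  · rw [hfun, if_neg haB, hfun, if_neg hbB] at hab
    exact σ.injective hab

noncomputable def enc (p : Equiv.Perm (Fin n) × Equiv.Perm (Fin n)) :
    Finset (Fin n) × Finset (Fin n) × (Fin n → Bool) × (Fin n → Fin n) :=
  (Bset p.1 p.2, Sfun p.1 p.2, fun i => decide (p.2 i = p.1 i), hfun p.1 p.2)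

lemma card_validPairs_le :
    (univ.filter (fun p : Equiv.Perm (Fin n) × Equiv.Perm (Fin n) => validPair p.1 p.2)).card
      ≤ 8 ^ n * n.factorial := by
  classical
  set W : Finset (Finset (Fin n) × Finset (Fin n) × (Fin n → Bool) × (Fin n → Fin n)) :=
    univ.powerset ×ˢ univ.powerset ×ˢ (univ : Finset (Fin n → Bool)) ×ˢ
      (univ.filter (fun f : Fin n → Fin n => Function.Injective f)) with hW
  have hcard : W.card ≤ 8 ^ n * n.factorial := by
    have hinj : (univ.filter (fun f : Fin n → Fin n => Function.Injective f)).card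
        ≤ n.factorial := by
      have := Finset.card_le_card_of_injOn
        (f := fun f : Fin n → Fin n =>
          if hf : Function.Injective f then (⟨f, hf⟩ : Fin n ↪ Fin n)
          else ⟨id, Function.injective_id⟩)
        (s := univ.filter (fun f : Fin n → Fin n => Function.Injective f))
        (t := (univ : Finset (Fin n ↪ Fin n)))
        (fun f _ => mem_univ _)
        (by
          intro f hf g hg hfg
          simp only [mem_coe, mem_filter] at hf hg
          simp only [dif_pos hf.2, dif_pos hg.2] at hfg
          exact congrArg (fun e : Fin n ↪ Fin n => (e : Fin n → Fin n)) hfg)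
      calc (univ.filter (fun f : Fin n → Fin n => Function.Injective f)).card
          ≤ (univ : Finset (Fin n ↪ Fin n)).card := this
        _ = n.factorial := by
            rw [Finset.card_univ, Fintype.card_embedding_eq]
            simp [Nat.descFactorial_self]
    have hWcard : W.card = 2 ^ n * (2 ^ n * (2 ^ n *
        (univ.filter (fun f : Fin n → Fin n => Function.Injective f)).card)) := by
      rw [hW, Finset.card_product, Finset.card_product, Finset.card_product,
        Finset.card_powerset, Finset.card_univ, Fintype.card_fin, Finset.card_univ,
        Fintype.card_fun, Fintype.card_bool, Fintype.card_fin]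
    rw [hWcard]
    calc 2 ^ n * (2 ^ n * (2 ^ n *
          (univ.filter (fun f : Fin n → Fin n => Function.Injective f)).card))
        ≤ 2 ^ n * (2 ^ n * (2 ^ n * n.factorial)) := by
          exact Nat.mul_le_mul_left _ (Nat.mul_le_mul_left _ (Nat.mul_le_mul_left _ hinj))
      _ = 8 ^ n * n.factorial := by
          rw [show (8 : ℕ) = 2 * 2 * 2 by norm_num, mul_pow, mul_pow]
          ring
  refine le_trans (Finset.card_le_card_of_injOn enc ?_ ?_) hcard
  · intro p hp
    rw [mem_coe, mem_filter] at hp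
    rw [hW, mem_coe]
    simp only [enc, Finset.mem_product]
    refine ⟨mem_powerset.mpr (subset_univ _), mem_powerset.mpr (subset_univ _), mem_univ _, ?_⟩
    rw [mem_filter]
    exact ⟨mem_univ _, hfun_inj hp.2⟩
  · intro p hp q hq hpq
    rw [mem_coe, mem_filter] at hp hq
    have hvp := hp.2
    have hvq := hq.2
    simp only [enc, Prod.mk.injEq] at hpq
    obtain ⟨hB, hS, hg, hh⟩ := hpq
    set σ := p.1 with hσdef
    set τ := p.2 with hτdef
    set σ' := q.1 with hσ'def
    set τ' := q.2 with hτ'def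
    have hstrp := fun i (hi : i ∈ Bset σ τ) => Bset_struct hvp hi
    have hstrq := fun i (hi : i ∈ Bset σ' τ') => Bset_struct hvq hi
    have hspecp := Sfun_spec hvp
    have hspecq := Sfun_spec hvq
    have hinjh := hfun_inj hvp
    -- recover σ
    have hσeq : σ = σ' := by
      ext x
      by_cases hxB : x ∈ Bset σ τ
      · have hxB' : x ∈ Bset σ' τ' := hB ▸ hxB
        by_cases hxS : x ∈ Sfun σ τ
        · have hxS' : x ∈ Sfun σ' τ' := hS ▸ hxS
          have e1 : hfun σ τ x = σ x := by rw [hfun, if_pos hxB, if_pos hxS]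
          have e2 : hfun σ' τ' x = σ' x := by rw [hfun, if_pos hxB', if_pos hxS']
          rw [← e1, ← e2, hh]
        · have hxS' : x ∉ Sfun σ' τ' := fun hc => hxS (hS.symm ▸ hc)
          have h1 : σ x ∈ Bset σ τ := (hstrp x hxB).2.2.2.2.1
          have h2 : σ x ∈ Sfun σ τ := ((hspecp x hxB).1).mpr hxS
          have e1 : hfun σ τ (σ x) = x := by
            rw [hfun, if_pos h1, if_pos h2]; exact (hstrp x hxB).1
          have h1' : σ' x ∈ Bset σ' τ' := (hstrq x hxB').2.2.2.2.1
          have h2' : σ' x ∈ Sfun σ' τ' := ((hspecq x hxB').1).mpr hxS'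
          have e1' : hfun σ' τ' (σ' x) = x := by
            rw [hfun, if_pos h1', if_pos h2']; exact (hstrq x hxB').1
          rw [← hh] at e1'
          exact congrArg Fin.val (hinjh (e1.trans e1'.symm))
      · have hxB' : x ∉ Bset σ' τ' := fun hc => hxB (hB.symm ▸ hc)
        have e1 : hfun σ τ x = σ x := by rw [hfun, if_neg hxB]
        have e2 : hfun σ' τ' x = σ' x := by rw [hfun, if_neg hxB']
        rw [← e1, ← e2, hh]
    -- recover τ
    have hτeq : τ = τ' := by
      ext x
      by_cases hxB : x ∈ Bset σ τ
      · have hxB' : x ∈ Bset σ' τ' := hB ▸ hxB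
        by_cases hxS : x ∈ Sfun σ τ
        · have hxS' : x ∈ Sfun σ' τ' := hS ▸ hxS
          have h1 : τ x ∈ Bset σ τ := (hstrp x hxB).2.2.2.2.2
          have h2 : τ x ∉ Sfun σ τ := fun hc => ((hspecp x hxB).2).mp hc hxS
          have e1 : hfun σ τ (τ x) = x := by
            rw [hfun, if_pos h1, if_neg h2]; exact (hstrp x hxB).2.2.1
          have h1' : τ' x ∈ Bset σ' τ' := (hstrq x hxB').2.2.2.2.2
          have h2' : τ' x ∉ Sfun σ' τ' := fun hc => ((hspecq x hxB').2).mp hc hxS'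
          have e1' : hfun σ' τ' (τ' x) = x := by
            rw [hfun, if_pos h1', if_neg h2']; exact (hstrq x hxB').2.2.1
          rw [← hh] at e1'
          exact congrArg Fin.val (hinjh (e1.trans e1'.symm))
        · have hxS' : x ∉ Sfun σ' τ' := fun hc => hxS (hS.symm ▸ hc)
          have e1 : hfun σ τ x = τ x := by rw [hfun, if_pos hxB, if_neg hxS]
          have e2 : hfun σ' τ' x = τ' x := by rw [hfun, if_pos hxB', if_neg hxS']
          rw [← e1, ← e2, hh]
      · have hxB' : x ∉ Bset σ' τ' := fun hc => hxB (hB.symm ▸ hc)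
        have hg1 := congrFun hg x
        have hpq : (τ x = σ x) ↔ (τ' x = σ' x) := by
          simpa using hg1
        by_cases hcase : τ x = σ x
        · rw [hcase, hσeq, ← hpq.mp hcase]
        · have hcase' : ¬ τ' x = σ' x := fun hc => hcase (hpq.mpr hc)
          have h2 : τ x = σ⁻¹ x := (not_mem_Bset.mp hxB).resolve_left hcase
          have h2' : τ' x = σ'⁻¹ x := (not_mem_Bset.mp hxB').resolve_left hcase'
          rw [h2, h2', hσeq]
    exact Prod.ext hσeq hτeq
end Counting

section Prob

open MeasureTheory ProbabilityTheory Finset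

variable {Ω : Type} [MeasurableSpace Ω] {P : Measure Ω} [IsProbabilityMeasure P]

lemma iIndep_integral_prod {ι : Type*} (f : ι → Ω → ℝ)
    (hindep : iIndepFun (m := fun _ => Real.measurableSpace) f P)
    (hmeas : ∀ i, Measurable (f i)) (hint : ∀ i, Integrable (f i) P) (s : Finset ι) :
    Integrable (fun ω => ∏ i ∈ s, f i ω) P ∧
      (∫ ω, ∏ i ∈ s, f i ω ∂P) = ∏ i ∈ s, ∫ ω, f i ω ∂P := by
  classical
  induction s using Finset.cons_induction_on with
  | empty =>
    constructor
    · simpa using (integrable_const (1 : ℝ) (μ := P))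
    · simp
  | @cons a s ha ih =>
    have hIF : IndepFun (∏ j ∈ s, f j) (f a) P :=
      hindep.indepFun_finsetProd_of_notMem hmeas ha
    have hfeq : (∏ j ∈ s, f j) = (fun ω => ∏ j ∈ s, f j ω) := by
      funext ω; simp
    have hprodInt : Integrable (∏ j ∈ s, f j) P := by rw [hfeq]; exact ih.1
    have hmulInt := hIF.integrable_mul hprodInt (hint a)
    have hmulEq := hIF.integral_mul_eq_mul_integral hprodInt.aestronglyMeasurable (hint a).aestronglyMeasurable
    constructor
    · have : ((∏ j ∈ s, f j) * f a) = (fun ω => ∏ i ∈ Finset.cons a s ha, f i ω) := by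
        funext ω
        rw [Pi.mul_apply, Finset.prod_apply, Finset.prod_cons, mul_comm]
      rwa [this] at hmulInt
    · rw [Finset.prod_cons]
      have h1 : (∫ ω, ∏ i ∈ Finset.cons a s ha, f i ω ∂P)
          = ∫ ω, ((∏ j ∈ s, f j) * f a) ω ∂P := by
        apply integral_congr_ae
        filter_upwards with ω
        rw [Pi.mul_apply, Finset.prod_apply, Finset.prod_cons, mul_comm]
      rw [h1, hmulEq, hfeq, ih.2, mul_comm]

end Prob

section Moments
open MeasureTheory ProbabilityTheory Finset Equiv

variable {Ω : Type} [MeasurableSpace Ω] {P : Measure Ω} [IsProbabilityMeasure P]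

lemma mb_int_abs_pow_le {Z : Ω → ℝ} (h : MomentBounded P Z 1) (k : ℕ) :
    (∫ ω, |Z ω| ^ k ∂P) ≤ (k.factorial : ℝ) := by
  induction k with
  | zero => simp
  | succ k ih =>
    have h2 := h.2 (k + 1) (by omega)
    simp only [Nat.add_sub_cancel, mul_one, Nat.cast_add, Nat.cast_one] at h2
    have hnn : (0 : ℝ) ≤ (k : ℝ) + 1 := by positivity
    calc (∫ ω, |Z ω| ^ (k + 1) ∂P) ≤ ((k : ℝ) + 1) * ∫ ω, |Z ω| ^ k ∂P := h2
      _ ≤ ((k : ℝ) + 1) * (k.factorial : ℝ) := mul_le_mul_of_nonneg_left ih hnn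
      _ = ((k + 1).factorial : ℝ) := by
          rw [Nat.factorial_succ]
          push_cast
          ring

lemma mb_int_pow {Z : Ω → ℝ} (h : MomentBounded P Z 1) (hm : Measurable Z) (k : ℕ) :
    Integrable (fun ω => Z ω ^ k) P := by
  apply (h.1 k).mono' ((hm.pow_const k).aestronglyMeasurable)
  filter_upwards with ω
  rw [Real.norm_eq_abs, abs_pow]

lemma mb_abs_integral_pow_le {Z : Ω → ℝ} (h : MomentBounded P Z 1) (hm : Measurable Z) (k : ℕ) :
    |∫ ω, Z ω ^ k ∂P| ≤ (k.factorial : ℝ) := by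
  calc |∫ ω, Z ω ^ k ∂P| = ‖∫ ω, Z ω ^ k ∂P‖ := (Real.norm_eq_abs _).symm
    _ ≤ ∫ ω, ‖Z ω ^ k‖ ∂P := norm_integral_le_integral_norm _
    _ = ∫ ω, |Z ω| ^ k ∂P := by
        apply integral_congr_ae
        filter_upwards with ω
        rw [Real.norm_eq_abs, abs_pow]
    _ ≤ (k.factorial : ℝ) := mb_int_abs_pow_le h k

variable {n : ℕ} {Y : Fin n → Fin n → Ω → ℝ}

lemma Y_nrm (hsymm : ∀ i j, Y i j = Y j i) (i j : Fin n) :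
    Y (nrm i j).1.1 (nrm i j).1.2 = Y i j := by
  rcases nrm_fst_snd i j with ⟨h1, h2⟩ | ⟨h1, h2⟩
  · rw [h1, h2]
  · rw [h1, h2]; exact hsymm j i

lemma prod_perm_eq (hsymm : ∀ i j, Y i j = Y j i) (σ : Equiv.Perm (Fin n)) (ω : Ω) :
    (∏ i, Y i (σ i) ω) = ∏ e : EIdx n, Y e.1.1 e.1.2 ω ^ emul σ e := by
  classical
  rw [← Finset.prod_fiberwise_of_maps_to (g := fun i => nrm i (σ i))
    (fun i _ => mem_univ _) (fun i => Y i (σ i) ω)]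
  apply Finset.prod_congr rfl
  intro e _
  have step : ∀ i ∈ univ.filter (fun i => nrm i (σ i) = e),
      Y i (σ i) ω = Y e.1.1 e.1.2 ω := by
    intro i hi
    have hfib := (mem_filter.mp hi).2
    rw [← congrFun (Y_nrm hsymm i (σ i)) ω, hfib]
  rw [Finset.prod_congr rfl step, Finset.prod_const, emul]

section WithHyp

lemma prodZ (hmeas : ∀ i j, Measurable (Y i j))
    (hindep : iIndepFun (m := fun _ => Real.measurableSpace)
      (fun p : EIdx n => Y p.1.1 p.1.2) P)
    (hmom : ∀ i j, i ≤ j → MomentBounded P (Y i j) 1) (k : EIdx n → ℕ) :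
    Integrable (fun ω => ∏ e : EIdx n, Y e.1.1 e.1.2 ω ^ k e) P ∧
      (∫ ω, ∏ e : EIdx n, Y e.1.1 e.1.2 ω ^ k e ∂P)
        = ∏ e : EIdx n, ∫ ω, Y e.1.1 e.1.2 ω ^ k e ∂P := by
  have hind2 : iIndepFun (m := fun _ => Real.measurableSpace)
      (fun e : EIdx n => fun ω => Y e.1.1 e.1.2 ω ^ k e) P := by
    have := hindep.comp (fun e : EIdx n => fun x : ℝ => x ^ k e)
      (fun e => measurable_id.pow_const (k e))
    exact this
  exact iIndep_integral_prod _ hind2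
    (fun e => (hmeas e.1.1 e.1.2).pow_const (k e))
    (fun e => mb_int_pow (hmom e.1.1 e.1.2 e.2) (hmeas e.1.1 e.1.2) (k e))
    univ

lemma term_bound (hmeas : ∀ i j, Measurable (Y i j))
    (hindep : iIndepFun (m := fun _ => Real.measurableSpace)
      (fun p : EIdx n => Y p.1.1 p.1.2) P)
    (hmom : ∀ i j, i ≤ j → MomentBounded P (Y i j) 1)
    (hzero : ∀ i j, i ≤ j → ∫ ω, Y i j ω ∂P = 0) (σ τ : Equiv.Perm (Fin n)) :
    (∫ ω, ∏ e : EIdx n, Y e.1.1 e.1.2 ω ^ (emul σ e + emul τ e) ∂P)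
      ≤ if validPair σ τ then (24 : ℝ) ^ (2 * n) else 0 := by
  classical
  set k : EIdx n → ℕ := fun e => emul σ e + emul τ e with hk
  have hprod := (prodZ hmeas hindep hmom k).2
  by_cases hv : validPair σ τ
  · rw [if_pos hv, hprod]
    have hksum : ∑ e : EIdx n, k e = 2 * n := by
      rw [hk]
      rw [Finset.sum_add_distrib, emul_sum, emul_sum]
      ring
    calc (∏ e : EIdx n, ∫ ω, Y e.1.1 e.1.2 ω ^ k e ∂P)
        ≤ |∏ e : EIdx n, ∫ ω, Y e.1.1 e.1.2 ω ^ k e ∂P| := le_abs_self _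
      _ = ∏ e : EIdx n, |∫ ω, Y e.1.1 e.1.2 ω ^ k e ∂P| := Finset.abs_prod _ _
      _ ≤ ∏ e : EIdx n, (24 : ℝ) ^ k e := by
          apply Finset.prod_le_prod (fun e _ => abs_nonneg _)
          intro e _
          have hk4 : k e ≤ 4 := by
            have h1 := emul_le_two σ e
            have h2 := emul_le_two τ e
            simp only [hk]
            omega
          have h1 := mb_abs_integral_pow_le (hmom e.1.1 e.1.2 e.2) (hmeas e.1.1 e.1.2) (k e)
          have h2 : ((k e).factorial : ℝ) ≤ (24 : ℝ) ^ k e := by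
            have : (k e).factorial ≤ 24 ^ k e := by
              interval_cases h : k e <;> norm_num [Nat.factorial]
            calc ((k e).factorial : ℝ) = ((k e).factorial : ℕ) := by norm_cast
              _ ≤ ((24 ^ k e : ℕ) : ℝ) := by exact_mod_cast this
              _ = (24 : ℝ) ^ k e := by push_cast; ring
          exact h1.trans h2
      _ = (24 : ℝ) ^ (2 * n) := by
          rw [Finset.prod_pow_eq_pow_sum, hksum]
  · rw [if_neg hv, hprod]
    unfold validPair at hv
    push_neg at hv
    obtain ⟨e, he⟩ := hv
    have hfac : (∫ ω, Y e.1.1 e.1.2 ω ^ k e ∂P) = 0 := by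
      have hke : k e = 1 := he
      rw [hke]
      simp only [pow_one]
      exact hzero e.1.1 e.1.2 e.2
    rw [Finset.prod_eq_zero (mem_univ e) hfac]

lemma perm_sq_bound (hmeas : ∀ i j, Measurable (Y i j))
    (hsymm : ∀ i j, Y i j = Y j i)
    (hindep : iIndepFun (m := fun _ => Real.measurableSpace)
      (fun p : EIdx n => Y p.1.1 p.1.2) P)
    (hmom : ∀ i j, i ≤ j → MomentBounded P (Y i j) 1)
    (hzero : ∀ i j, i ≤ j → ∫ ω, Y i j ω ∂P = 0) :
    Integrable (fun ω => (∑ σ : Equiv.Perm (Fin n), ∏ i, Y i (σ i) ω) ^ 2) P ∧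
      (∫ ω, (∑ σ : Equiv.Perm (Fin n), ∏ i, Y i (σ i) ω) ^ 2 ∂P)
        ≤ (4608 : ℝ) ^ n * n.factorial := by
  classical
  set T : Equiv.Perm (Fin n) × Equiv.Perm (Fin n) → Ω → ℝ :=
    fun p ω => ∏ e : EIdx n, Y e.1.1 e.1.2 ω ^ (emul p.1 e + emul p.2 e) with hT
  have hpoint : ∀ ω, (∑ σ : Equiv.Perm (Fin n), ∏ i, Y i (σ i) ω) ^ 2
      = ∑ p : Equiv.Perm (Fin n) × Equiv.Perm (Fin n), T p ω := by
    intro ω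
    rw [sq, Finset.sum_mul_sum]
    rw [Fintype.sum_prod_type]
    apply Finset.sum_congr rfl
    intro σ _
    apply Finset.sum_congr rfl
    intro τ _
    rw [prod_perm_eq hsymm σ ω, prod_perm_eq hsymm τ ω, ← Finset.prod_mul_distrib]
    apply Finset.prod_congr rfl
    intro e _
    rw [pow_add]
  have hTint : ∀ p : Equiv.Perm (Fin n) × Equiv.Perm (Fin n), Integrable (T p) P :=
    fun p => (prodZ hmeas hindep hmom (fun e => emul p.1 e + emul p.2 e)).1
  have hint : Integrable (fun ω => (∑ σ : Equiv.Perm (Fin n), ∏ i, Y i (σ i) ω) ^ 2) P := by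
    apply (integrable_finset_sum univ (fun p _ => hTint p)).congr
    filter_upwards with ω
    exact (hpoint ω).symm
  refine ⟨hint, ?_⟩
  have hIeq : (∫ ω, (∑ σ : Equiv.Perm (Fin n), ∏ i, Y i (σ i) ω) ^ 2 ∂P)
      = ∑ p : Equiv.Perm (Fin n) × Equiv.Perm (Fin n), ∫ ω, T p ω ∂P := by
    rw [integral_congr_ae (ae_of_all _ hpoint)]
    exact integral_finset_sum univ (fun p _ => hTint p)
  rw [hIeq]
  have hcount := card_validPairs_le (n := n)
  calc (∑ p : Equiv.Perm (Fin n) × Equiv.Perm (Fin n), ∫ ω, T p ω ∂P)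
      ≤ ∑ p : Equiv.Perm (Fin n) × Equiv.Perm (Fin n),
          (if validPair p.1 p.2 then (24 : ℝ) ^ (2 * n) else 0) := by
        apply Finset.sum_le_sum
        intro p _
        exact term_bound hmeas hindep hmom hzero p.1 p.2
    _ = ((univ.filter (fun p : Equiv.Perm (Fin n) × Equiv.Perm (Fin n) =>
          validPair p.1 p.2)).card : ℝ) * (24 : ℝ) ^ (2 * n) := by
        rw [Finset.sum_ite, Finset.sum_const, Finset.sum_const]
        simp [nsmul_eq_mul]
    _ ≤ ((8 ^ n * n.factorial : ℕ) : ℝ) * (24 : ℝ) ^ (2 * n) := by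
        apply mul_le_mul_of_nonneg_right _ (by positivity)
        exact_mod_cast hcount
    _ = (4608 : ℝ) ^ n * n.factorial := by
        push_cast
        rw [pow_mul]
        rw [show ((24 : ℝ) ^ 2) = 576 by norm_num]
        rw [show (4608 : ℝ) = 8 * 576 by norm_num, mul_pow]
        ring

end WithHyp
end Moments


theorem symmetric_permanent_concentration :
    ∃ c : ℝ, 0 < c ∧
      ∀ (Ω : Type) (_ : MeasurableSpace Ω) (P : Measure Ω), IsProbabilityMeasure P →
      ∀ (n : ℕ) (Y : Fin n → Fin n → Ω → ℝ),
        (∀ i j, Measurable (Y i j)) →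
        (∀ i j, Y i j = Y j i) →
        iIndepFun (m := fun _ => Real.measurableSpace)
          (fun p : {p : Fin n × Fin n // p.1 ≤ p.2} => Y p.1.1 p.1.2) P →
        (∀ i j, i ≤ j → MomentBounded P (Y i j) 1) →
        (∀ i j, i ≤ j → ∫ ω, Y i j ω ∂P = 0) →
      ∀ t : ℝ, 0 < t →
        (P {ω | t * Real.sqrt (Nat.factorial n) ≤
            |∑ σ : Equiv.Perm (Fin n), ∏ i, Y i (σ i) ω|}).toReal ≤
          max (Real.exp (-(n : ℝ)))
            (Real.exp 2 * Real.exp (-(c * t ^ ((2 : ℝ) / (n : ℝ))))) := by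
  refine ⟨1 / 100000, by norm_num, ?_⟩
  intro Ω mΩ P hP n Y hmeas hsymm hindep hmom hzero t ht
  haveI := hP
  set c : ℝ := 1 / 100000 with hc
  set X : Ω → ℝ := fun ω => ∑ σ : Equiv.Perm (Fin n), ∏ i, Y i (σ i) ω with hX
  set E : Set Ω := {ω | t * Real.sqrt (Nat.factorial n) ≤ |X ω|} with hE
  have hPE1 : (P E).toReal ≤ 1 := by
    have h1 : P E ≤ P Set.univ := measure_mono (Set.subset_univ _)
    have := ENNReal.toReal_mono (by simp) h1
    simpa using this
  rcases Nat.eq_zero_or_pos n with hn0 | hn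
  · subst hn0
    refine le_trans hPE1 (le_trans ?_ (le_max_left _ _))
    simp
  -- n ≥ 1
  set s : ℝ := t ^ ((2 : ℝ) / (n : ℝ)) with hs
  have hspos : 0 < s := Real.rpow_pos_of_pos ht _
  by_cases hcase : s < 4608 * Real.exp 1
  · -- small s: right branch is ≥ 1
    refine le_trans hPE1 (le_trans ?_ (le_max_right _ _))
    have hcs : c * s ≤ 2 := by
      have he := Real.exp_one_lt_d9
      rw [hc]
      nlinarith [hspos]
    have : Real.exp 2 * Real.exp (-(c * s)) = Real.exp (2 - c * s) := by
      rw [← Real.exp_add]; ring_nf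
    rw [this]
    have h0 : (0 : ℝ) ≤ 2 - c * s := by linarith
    calc (1 : ℝ) = Real.exp 0 := (Real.exp_zero).symm
      _ ≤ Real.exp (2 - c * s) := Real.exp_le_exp.mpr h0
  · -- large s: Chebyshev
    push_neg at hcase
    refine le_trans ?_ (le_max_left _ _)
    have hXm : Measurable X := by
      apply Finset.measurable_sum
      intro σ _
      apply Finset.measurable_prod
      intro i _
      exact hmeas i (σ i)
    obtain ⟨hint, hbound⟩ := perm_sq_bound hmeas hsymm hindep hmom hzero
    have hEmeas : MeasurableSet E := by
      rw [hE]
      exact measurableSet_le measurable_const hXm.abs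
    set a : ℝ := t * Real.sqrt (Nat.factorial n) with ha
    have hfacpos : (0 : ℝ) < (Nat.factorial n : ℝ) := by
      exact_mod_cast Nat.factorial_pos n
    have hapos : 0 < a := by
      apply mul_pos ht
      exact Real.sqrt_pos.mpr hfacpos
    have ha2 : a ^ 2 = t ^ 2 * (Nat.factorial n : ℝ) := by
      rw [ha, mul_pow, Real.sq_sqrt (le_of_lt hfacpos)]
    -- Markov
    have hmarkov : a ^ 2 * (P E).toReal ≤ ∫ ω, X ω ^ 2 ∂P := by
      have h1 : a ^ 2 * (P E).toReal = ∫ ω in E, a ^ 2 ∂P := by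
        rw [setIntegral_const, smul_eq_mul, mul_comm]; rfl
      rw [h1]
      have h2 : (∫ ω in E, a ^ 2 ∂P) ≤ ∫ ω in E, X ω ^ 2 ∂P := by
        apply setIntegral_mono_on (integrableOn_const (measure_ne_top _ _))
          (hint.integrableOn) hEmeas
        intro ω hω
        rw [hE] at hω
        have hω' : a ≤ |X ω| := hω
        calc a ^ 2 ≤ |X ω| ^ 2 := by
              apply pow_le_pow_left₀ (le_of_lt hapos) hω'
          _ = X ω ^ 2 := sq_abs _
      refine h2.trans ?_
      apply setIntegral_le_integral hint
      filter_upwards with ω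
      exact sq_nonneg _
    have hPEle : (P E).toReal ≤ (4608 : ℝ) ^ n / t ^ 2 := by
      have ha2pos : 0 < a ^ 2 := pow_pos hapos 2
      have step1 : (P E).toReal ≤ (∫ ω, X ω ^ 2 ∂P) / a ^ 2 := by
        rw [le_div_iff₀ ha2pos, mul_comm]
        exact hmarkov
      have step2 : (∫ ω, X ω ^ 2 ∂P) / a ^ 2
          ≤ ((4608 : ℝ) ^ n * (Nat.factorial n : ℝ)) / a ^ 2 := by
        apply div_le_div_of_nonneg_right hbound ha2pos.le
      have step3 : ((4608 : ℝ) ^ n * (Nat.factorial n : ℝ)) / a ^ 2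
          = (4608 : ℝ) ^ n / t ^ 2 := by
        rw [ha2, mul_div_mul_right _ _ (ne_of_gt hfacpos)]
      exact step1.trans (step2.trans_eq step3)
    refine hPEle.trans ?_
    -- t^2 = s^n
    have hts : s ^ n = t ^ 2 := by
      rw [hs, ← Real.rpow_natCast (t ^ ((2 : ℝ) / (n : ℝ))) n,
        ← Real.rpow_mul (le_of_lt ht)]
      have hne : (n : ℝ) ≠ 0 := by
        exact_mod_cast Nat.pos_iff_ne_zero.mp hn
      rw [div_mul_cancel₀ _ hne]
      norm_num
    rw [← hts]
    have hdiv : (4608 : ℝ) ^ n / s ^ n = (4608 / s) ^ n := (div_pow _ _ _).symm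
    rw [hdiv]
    have hfrac : 4608 / s ≤ Real.exp (-1) := by
      rw [Real.exp_neg]
      rw [div_le_iff₀ hspos]
      rw [inv_mul_eq_div, le_div_iff₀ (Real.exp_pos 1)]
      linarith
    calc (4608 / s) ^ n ≤ (Real.exp (-1)) ^ n := by
          apply pow_le_pow_left₀ _ hfrac
          positivity
      _ = Real.exp (-(n : ℝ)) := by
          rw [← Real.exp_nat_mul]
          norm_num
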